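/- Let X be a K-convex Banach space and f ∈ C¹(ℝ;X) with both f and f' in γ(ℝ;X). Then for every t ∈ ℝ, the sequence (f(n+t))_{n∈ℤ} satisfies ‖(f(n+t))_{n∈ℤ}‖_{ε(ℤ;X)} ≲ ‖f‖_{γ(ℝ;X)} + ‖f'‖_{γ(ℝ;X)}. -/

import Mathlib

set_option autoImplicit false

open MeasureTheory ProbabilityTheory ENNReal Set Filter

noncomputable section

universe u v w

/-- Finite Rademacher average: the mean over all sign choices of the norm of the signed sum. -/
def radAvgF {ι X : Type*} [Fintype ι] [DecidableEq ι] [NormedAddCommGroup X]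
    (x : ι → X) : ℝ :=
  (∑ ε : ι → Bool, ‖∑ n, (if ε n then x n else -x n)‖) / 2 ^ (Fintype.card ι)

/-- Rademacher norm of a family: supremum of the finite Rademacher averages over
finite subfamilies. -/
def radNorm {ι X : Type*} [DecidableEq ι] [NormedAddCommGroup X] (x : ι → X) : ℝ≥0∞ :=
  ⨆ s : Finset ι, ENNReal.ofReal (radAvgF (fun n : {a // a ∈ s} => x n.1))

/-- Product of standard Gaussian measures on `Fin N → ℝ`. -/
def gaussPi (N : ℕ) : Measure (Fin N → ℝ) := Measure.pi fun _ => gaussianReal 0 1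

/-- The γ-(summing) norm of the Pettis integral operator associated with `f : S → X`:
the supremum, over finite orthonormal systems `g` in `L²(μ)`, of the square root of the
second Gaussian moment of `∑ γₙ • ∫ gₙ f dμ`. -/
def gammaNorm {S X : Type*} [MeasurableSpace S] [NormedAddCommGroup X] [NormedSpace ℝ X]
    (μ : Measure S) (f : S → X) : ℝ≥0∞ :=
  ⨆ (N : ℕ) (g : Fin N → S → ℝ)
      (_ : ∀ n m : Fin N, (∫ s, g n s * g m s ∂μ) = if n = m then 1 else 0),
    ENNReal.ofReal (Real.sqrt (∫ ω, ‖∑ n, ω n • (∫ s, g n s • f s ∂μ)‖ ^ 2 ∂(gaussPi N)))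

/-- `f` belongs to `γ(S;X)`: the Pettis integral operator of `f` is approximable in the
γ-norm by finite-rank kernel operators with `L²` kernels. -/
def MemGamma {S X : Type*} [MeasurableSpace S] [NormedAddCommGroup X] [NormedSpace ℝ X]
    (μ : Measure S) (f : S → X) : Prop :=
  ∀ ε : ℝ≥0∞, 0 < ε → ∃ (N : ℕ) (g : Fin N → S → ℝ) (x : Fin N → X),
    (∀ n, MemLp (g n) 2 μ) ∧
    gammaNorm μ (fun s => f s - ∑ n, g n s • x n) ≤ ε

/-- A Banach space is K-convex: Rademacher averages are computed, up to a constant,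
by duality against Rademacher-normalized sequences of functionals. -/
def KConvex (X : Type*) [NormedAddCommGroup X] [NormedSpace ℝ X] : Prop :=
  ∃ C : ℝ, 0 < C ∧ ∀ (N : ℕ) (x : Fin N → X) (r : ℝ),
    (∀ φ : Fin N → (X →L[ℝ] ℝ), radAvgF φ ≤ 1 → |∑ n, φ n (x n)| ≤ r) →
    radAvgF x ≤ C * r


set_option linter.unusedSectionVars false
set_option linter.unusedVariables false

/-! ### Gaussian basics -/

lemma gauss_integrable (h : ℝ → ℝ) (hm : Measurable h) (hb : ∀ x, |h x| ≤ 1 + x ^ 2) :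
    Integrable h (gaussianReal 0 1) := by
  rw [gaussianReal_of_var_ne_zero _ one_ne_zero,
    integrable_withDensity_iff (measurable_gaussianPDF 0 1)
      (ae_of_all _ fun x => ENNReal.ofReal_lt_top)]
  have hpdf : ∀ x : ℝ, (gaussianPDF 0 1 x).toReal = gaussianPDFReal 0 1 x := fun x =>
    ENNReal.toReal_ofReal (gaussianPDFReal_nonneg 0 1 x)
  have hb2 : Integrable (fun x : ℝ => (1 + x ^ 2) * gaussianPDFReal 0 1 x) := by
    have h1 : Integrable (fun x : ℝ => Real.exp (-(2⁻¹ : ℝ) * x ^ 2)) :=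
      integrable_exp_neg_mul_sq (by norm_num)
    have h2 : Integrable (fun x : ℝ => x ^ (2 : ℝ) * Real.exp (-(2⁻¹ : ℝ) * x ^ 2)) :=
      integrable_rpow_mul_exp_neg_mul_sq (by norm_num) (by norm_num)
    have h2' : Integrable (fun x : ℝ => x ^ 2 * Real.exp (-(2⁻¹ : ℝ) * x ^ 2)) := by
      simpa [Real.rpow_natCast] using h2
    have := ((h1.add h2').const_mul (√(2 * Real.pi))⁻¹)
    refine this.congr (ae_of_all _ fun x => ?_)
    simp only [gaussianPDFReal, Pi.add_apply]
    push_cast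
    rw [show -(x - 0) ^ 2 / (2 * 1) = -(2⁻¹ : ℝ) * x ^ 2 by ring, mul_one]
    ring
  refine hb2.mono' ((hm.mul (measurable_gaussianPDF 0 1).ennreal_toReal).aestronglyMeasurable)
    (ae_of_all _ fun x => ?_)
  rw [Real.norm_eq_abs, hpdf, abs_mul, abs_of_nonneg (gaussianPDFReal_nonneg 0 1 x)]
  exact mul_le_mul_of_nonneg_right (hb x) (gaussianPDFReal_nonneg 0 1 x)

lemma gauss_integrable_abs : Integrable (fun x : ℝ => |x|) (gaussianReal 0 1) := by
  refine gauss_integrable _ measurable_abs fun x => ?_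
  rw [abs_abs]
  nlinarith [sq_nonneg (|x| - 1), abs_nonneg x, sq_abs x]

lemma gauss_memℒp_two : MemLp (fun x : ℝ => x) 2 (gaussianReal 0 1) := by
  rw [show (fun x : ℝ => x) = id from rfl,
    memLp_two_iff_integrable_sq measurable_id.aestronglyMeasurable]
  show Integrable (fun x : ℝ => x ^ 2) _
  refine gauss_integrable _ (measurable_id.pow_const 2) fun x => ?_
  rw [abs_of_nonneg (sq_nonneg x)]; linarith

def mAbs : ℝ := ∫ x, |x| ∂(gaussianReal 0 1)

lemma mAbs_pos : 0 < mAbs := by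
  rw [mAbs, integral_pos_iff_support_of_nonneg_ae (ae_of_all _ fun x => abs_nonneg x)
    gauss_integrable_abs]
  have : Function.support (fun x : ℝ => |x|) = {0}ᶜ := by
    ext x; simp [Function.support, abs_eq_zero]
  rw [this]
  have h0 : (gaussianReal 0 1) {(0 : ℝ)} = 0 := by
    refine gaussianReal_absolutelyContinuous 0 one_ne_zero ?_
    simp
  by_contra hc
  push_neg at hc
  have hc0 : (gaussianReal 0 1) {(0:ℝ)}ᶜ = 0 := le_antisymm hc zero_le
  have hle := measure_union_le (μ := gaussianReal 0 1) {(0:ℝ)} {(0:ℝ)}ᶜ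
  rw [Set.union_compl_self, measure_univ, h0, hc0] at hle
  simp at hle
/-! ### gaussPi basics -/

instance gaussPi_prob (N : ℕ) : IsProbabilityMeasure (gaussPi N) := by
  rw [gaussPi]; infer_instance

lemma eval_measurePreserving (N : ℕ) (i : Fin N) :
    MeasurePreserving (fun ω : Fin N → ℝ => ω i) (gaussPi N) (gaussianReal 0 1) := by
  refine ⟨measurable_pi_apply i, ?_⟩
  ext s hs
  rw [Measure.map_apply (measurable_pi_apply i) hs, gaussPi, Set.eval_preimage,
    Measure.pi_pi]
  rw [Fintype.prod_eq_single i (fun j hj => by simp [Function.update_of_ne hj])]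
  simp

lemma signflip_measurePreserving (N : ℕ) (σ : Fin N → ℝ) (hσ : ∀ i, σ i = 1 ∨ σ i = -1) :
    MeasurePreserving (fun (ω : Fin N → ℝ) i => σ i * ω i) (gaussPi N) (gaussPi N) := by
  refine measurePreserving_pi _ _ fun i => ⟨measurable_const_mul _, ?_⟩
  have := gaussianReal_map_const_mul (μ := 0) (v := 1) (σ i)
  rw [this, mul_zero]
  congr 1
  rcases hσ i with h | h <;> rw [h] <;> ext <;> norm_num

lemma coord_integrable_abs (N : ℕ) (i : Fin N) :
    Integrable (fun ω : Fin N → ℝ => |ω i|) (gaussPi N) :=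
  ((eval_measurePreserving N i).integrable_comp
    measurable_abs.aestronglyMeasurable).2 gauss_integrable_abs

lemma coord_integral_abs (N : ℕ) (i : Fin N) :
    ∫ ω : Fin N → ℝ, |ω i| ∂(gaussPi N) = mAbs := by
  rw [mAbs, ← (eval_measurePreserving N i).map_eq]
  exact (integral_map (measurable_pi_apply i).aemeasurable
      (measurable_abs.aestronglyMeasurable (μ := Measure.map (fun ω : Fin N → ℝ => ω i)
        (gaussPi N)))).symm

lemma coord_memℒp_two (N : ℕ) (i : Fin N) :
    MemLp (fun ω : Fin N → ℝ => ω i) 2 (gaussPi N) :=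
  gauss_memℒp_two.comp_measurePreserving (eval_measurePreserving N i)
/-! ### radAvgF basics -/

section RadAvg
variable {ι X : Type*} [Fintype ι] [DecidableEq ι] [NormedAddCommGroup X]

lemma radAvgF_nonneg (x : ι → X) : 0 ≤ radAvgF x := by
  apply div_nonneg _ (by positivity)
  exact Finset.sum_nonneg fun _ _ => norm_nonneg _

lemma radAvgF_add_le (x y : ι → X) :
    radAvgF (fun n => x n + y n) ≤ radAvgF x + radAvgF y := by
  rw [radAvgF, radAvgF, radAvgF, ← add_div, div_le_div_iff_of_pos_right (by positivity),
    ← Finset.sum_add_distrib]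
  refine Finset.sum_le_sum fun ε _ => ?_
  calc ‖∑ n, (if ε n then x n + y n else -(x n + y n))‖
      = ‖(∑ n, (if ε n then x n else -x n)) + ∑ n, (if ε n then y n else -y n)‖ := by
        rw [← Finset.sum_add_distrib]
        congr 1; refine Finset.sum_congr rfl fun n _ => ?_
        by_cases h : ε n <;> simp [h, neg_add, add_comm]
    _ ≤ _ := norm_add_le _ _

lemma radAvgF_neg (x : ι → X) : radAvgF (fun n => -x n) = radAvgF x := by
  rw [radAvgF, radAvgF]
  congr 1
  refine Fintype.sum_bijective (fun ε : ι → Bool => fun n => !(ε n))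
    (Function.Involutive.bijective fun ε => by funext n; simp) _ _ fun ε => ?_
  congr 1
  refine Fintype.sum_congr _ _ fun n => ?_
  by_cases h : ε n <;> simp [h]

lemma radAvgF_sub_le (x y : ι → X) :
    radAvgF (fun n => x n - y n) ≤ radAvgF x + radAvgF y := by
  have := radAvgF_add_le x (fun n => -y n)
  rw [radAvgF_neg] at this
  simpa [sub_eq_add_neg] using this

lemma radAvgF_smul {𝕜 : Type*} [NormedField 𝕜] [NormedSpace 𝕜 X] (c : 𝕜) (x : ι → X) :
    radAvgF (fun n => c • x n) = ‖c‖ * radAvgF x := by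
  rw [radAvgF, radAvgF, ← mul_div_assoc, Finset.mul_sum]
  congr 1
  refine Finset.sum_congr rfl fun ε _ => ?_
  rw [← norm_smul, Finset.smul_sum]
  congr 1
  refine Finset.sum_congr rfl fun n _ => ?_
  by_cases h : ε n <;> simp [h]

lemma radAvgF_comp_equiv {κ : Type*} [Fintype κ] [DecidableEq κ] (e : κ ≃ ι) (x : ι → X) :
    radAvgF (fun n => x (e n)) = radAvgF x := by
  rw [radAvgF, radAvgF, Fintype.card_congr e]
  congr 1
  refine Fintype.sum_bijective (fun ε : κ → Bool => fun i => ε (e.symm i))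
    ((Equiv.arrowCongr e (Equiv.refl Bool)).symm.symm.bijective) _ _ fun ε => ?_
  congr 1
  refine Fintype.sum_equiv e _ _ fun n => ?_
  simp

end RadAvg
/-! ### Main Gaussian comparison -/

section Comparison
variable {X : Type*} [NormedAddCommGroup X] [NormedSpace ℝ X] [CompleteSpace X]

lemma abs_le_one_add_sq (x : ℝ) : |x| ≤ 1 + x ^ 2 := by
  nlinarith [sq_nonneg (|x| - 1), sq_abs x, abs_nonneg x]

lemma coord_integrable (N : ℕ) (i : Fin N) :
    Integrable (fun ω : Fin N → ℝ => ω i) (gaussPi N) :=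
  ((eval_measurePreserving N i).integrable_comp
    measurable_id.aestronglyMeasurable).2
    (gauss_integrable _ measurable_id abs_le_one_add_sq)

lemma term_integrable (N : ℕ) (c : Fin N → ℝ) (x : Fin N → X) :
    Integrable (fun ω : Fin N → ℝ => ∑ n, (c n * ω n) • x n) (gaussPi N) :=
  integrable_finset_sum _ fun n _ => ((coord_integrable N n).const_mul (c n)).smul_const (x n)

lemma term_integrable_abs (N : ℕ) (c : Fin N → ℝ) (x : Fin N → X) :
    Integrable (fun ω : Fin N → ℝ => ∑ n, (c n * |ω n|) • x n) (gaussPi N) :=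
  integrable_finset_sum _ fun n _ => ((coord_integrable_abs N n).const_mul (c n)).smul_const (x n)

lemma term_memℒp_two (N : ℕ) (x : Fin N → X) :
    MemLp (fun ω : Fin N → ℝ => ‖∑ n, ω n • x n‖) 2 (gaussPi N) := by
  have h : MemLp (fun ω : Fin N → ℝ => ∑ n, ω n • x n) 2 (gaussPi N) := by
    refine memLp_finset_sum Finset.univ fun n _ => ?_
    refine MemLp.of_le ((coord_memℒp_two N n).const_mul ‖x n‖)
      (((measurable_pi_apply n).stronglyMeasurable.smul_const (x n)).aestronglyMeasurable)
      (ae_of_all _ fun ω => ?_)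
    rw [norm_smul, Real.norm_eq_abs, Real.norm_eq_abs, abs_mul, abs_norm, mul_comm]
  exact h.norm

/-- Sign function of a boolean. -/
def bsgn (b : Bool) : ℝ := if b then 1 else -1

lemma radAvgF_le_sqrt_gauss (N : ℕ) (x : Fin N → X) :
    radAvgF x ≤ mAbs⁻¹ * Real.sqrt (∫ ω, ‖∑ n, ω n • x n‖ ^ 2 ∂(gaussPi N)) := by
  classical
  set π := gaussPi N with hπ
  -- Step 1 : mAbs * radAvgF x ≤ ∫ ‖∑ ω n • x n‖
  have step1 : mAbs * radAvgF x ≤ ∫ ω, ‖∑ n, ω n • x n‖ ∂π := by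
    have key1 : ∀ ε : Fin N → Bool,
        (∫ ω, ∑ n, ((bsgn (ε n)) * |ω n|) • x n ∂π)
          = mAbs • ∑ n, (if ε n then x n else -x n) := by
      intro ε
      rw [integral_finset_sum _ (fun n _ =>
        ((coord_integrable_abs N n).const_mul (bsgn (ε n))).smul_const (x n))]
      rw [Finset.smul_sum]
      refine Finset.sum_congr rfl fun n _ => ?_
      rw [integral_smul_const, integral_const_mul, coord_integral_abs]
      rcases Bool.dichotomy (ε n) with h | h <;>
        simp [bsgn, h, mul_smul, smul_smul, mul_comm]
    have key2 : ∀ ε : Fin N → Bool,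
        mAbs * ‖∑ n, (if ε n then x n else -x n)‖
          ≤ ∫ ω, ‖∑ n, ((bsgn (ε n)) * |ω n|) • x n‖ ∂π := by
      intro ε
      calc mAbs * ‖∑ n, (if ε n then x n else -x n)‖
          = ‖mAbs • ∑ n, (if ε n then x n else -x n)‖ := by
            rw [norm_smul, Real.norm_eq_abs, abs_of_nonneg mAbs_pos.le]
        _ = ‖∫ ω, ∑ n, ((bsgn (ε n)) * |ω n|) • x n ∂π‖ := by rw [key1]
        _ ≤ _ := norm_integral_le_integral_norm _
    have key3 : ∑ ε : Fin N → Bool, ∫ ω, ‖∑ n, ((bsgn (ε n)) * |ω n|) • x n‖ ∂π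
        = ∑ ε : Fin N → Bool, ∫ ω, ‖∑ n, ((bsgn (ε n)) * ω n) • x n‖ ∂π := by
      rw [← integral_finset_sum _ (fun ε _ => (term_integrable_abs N _ x).norm),
        ← integral_finset_sum _ (fun ε _ => (term_integrable N _ x).norm)]
      refine integral_congr_ae (ae_of_all _ fun ω => ?_)
      refine (Fintype.sum_bijective (fun ε : Fin N → Bool => fun n => (ε n != decide (ω n < 0)))
        (Function.Involutive.bijective fun ε => by funext n; simp) _ _ fun ε => ?_).symm
      congr 1
      refine Finset.sum_congr rfl fun n _ => ?_
      congr 1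
      rcases lt_or_ge (ω n) 0 with h | h
      · rcases Bool.dichotomy (ε n) with h2 | h2 <;>
          simp [bsgn, h, h2, abs_of_neg h]
      · rcases Bool.dichotomy (ε n) with h2 | h2 <;>
          simp [bsgn, h.not_gt, h2, abs_of_nonneg h]
    have key4 : ∀ ε : Fin N → Bool,
        ∫ ω, ‖∑ n, ((bsgn (ε n)) * ω n) • x n‖ ∂π = ∫ ω, ‖∑ n, ω n • x n‖ ∂π := by
      intro ε
      have hmp := signflip_measurePreserving N (fun n => bsgn (ε n))
        (fun n => by rcases Bool.dichotomy (ε n) with h | h <;> simp [bsgn, h])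
      have haesm : AEStronglyMeasurable (fun ω : Fin N → ℝ => ‖∑ n, ω n • x n‖)
          (Measure.map (fun (ω : Fin N → ℝ) i => bsgn (ε i) * ω i) π) := by
        rw [hmp.map_eq]; exact (term_memℒp_two N x).aestronglyMeasurable
      rw [hπ]
      conv_rhs => rw [← hmp.map_eq]
      rw [integral_map hmp.measurable.aemeasurable (hπ ▸ haesm)]
    -- combine
    have hcount : (∑ _ε : Fin N → Bool, (1:ℝ)) = 2 ^ N := by
      simp [Finset.sum_const, Fintype.card_fun]
    rw [radAvgF, Fintype.card_fin, mul_div_assoc']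
    rw [div_le_iff₀ (by positivity)]
    calc mAbs * ∑ ε : Fin N → Bool, ‖∑ n, (if ε n then x n else -x n)‖
        = ∑ ε : Fin N → Bool, mAbs * ‖∑ n, (if ε n then x n else -x n)‖ := by
          rw [Finset.mul_sum]
      _ ≤ ∑ ε : Fin N → Bool, ∫ ω, ‖∑ n, ((bsgn (ε n)) * |ω n|) • x n‖ ∂π :=
          Finset.sum_le_sum fun ε _ => key2 ε
      _ = ∑ ε : Fin N → Bool, ∫ ω, ‖∑ n, ω n • x n‖ ∂π := by
          rw [key3]; exact Finset.sum_congr rfl fun ε _ => key4 ε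
      _ = (∫ ω, ‖∑ n, ω n • x n‖ ∂π) * 2 ^ N := by
          rw [Finset.sum_const, nsmul_eq_mul, mul_comm]
          norm_num [Fintype.card_fun]
  -- Step 2 : ∫ ‖·‖ ≤ sqrt (∫ ‖·‖²)
  have step2 : (∫ ω, ‖∑ n, ω n • x n‖ ∂π) ≤
      Real.sqrt (∫ ω, ‖∑ n, ω n • x n‖ ^ 2 ∂π) := by
    refine Real.le_sqrt_of_sq_le ?_
    have hv := variance_nonneg (fun ω => ‖∑ n, ω n • x n‖) π
    rw [variance_eq_sub (term_memℒp_two N x)] at hv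
    simp only [Pi.pow_apply] at hv
    linarith
  calc radAvgF x = mAbs⁻¹ * (mAbs * radAvgF x) := by
        rw [← mul_assoc, inv_mul_cancel₀ mAbs_pos.ne', one_mul]
    _ ≤ _ :=
        mul_le_mul_of_nonneg_left (step1.trans step2) (inv_nonneg.mpr mAbs_pos.le)

end Comparison
/-! ### Orthonormal systems of translates and FTC decomposition -/

section Calc
variable {X : Type*} [NormedAddCommGroup X] [NormedSpace ℝ X] [CompleteSpace X]

lemma ortho_system (ρ : ℝ → ℝ) (hsupp : ∀ x, x ∉ Ico (0:ℝ) 1 → ρ x = 0)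
    (hnorm : (∫ x, ρ x * ρ x) = 1) {N : ℕ} (a : Fin N → ℝ)
    (ha : ∀ i j : Fin N, i ≠ j → 1 ≤ |a i - a j|) :
    ∀ n m : Fin N, (∫ s, ρ (s - a n) * ρ (s - a m)) = if n = m then 1 else 0 := by
  intro n m
  by_cases h : n = m
  · subst h
    simp only [if_true]
    rw [← hnorm]
    exact integral_sub_right_eq_self (fun s => ρ s * ρ s) (a n)
  · simp only [h, if_false]
    have hz : (fun s => ρ (s - a n) * ρ (s - a m)) = fun _ => (0:ℝ) := by
      funext s
      by_cases h1 : s - a n ∈ Ico (0:ℝ) 1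
      · by_cases h2 : s - a m ∈ Ico (0:ℝ) 1
        · exfalso
          obtain ⟨h1a, h1b⟩ := h1
          obtain ⟨h2a, h2b⟩ := h2
          have := ha n m h
          rw [le_abs] at this
          rcases this with h3 | h3 <;> linarith
        · rw [hsupp _ h2, mul_zero]
      · rw [hsupp _ h1, zero_mul]
    rw [hz, integral_zero]

lemma integral_shift_to_Ico (ρ : ℝ → ℝ) (hsupp : ∀ x, x ∉ Ico (0:ℝ) 1 → ρ x = 0)
    (a : ℝ) (F : ℝ → X) :
    (∫ s, ρ (s - a) • F s) = ∫ x in Ico a (a+1), ρ (x - a) • F x := by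
  rw [← integral_indicator measurableSet_Ico]
  congr 1
  funext s
  by_cases h : s ∈ Ico a (a+1)
  · rw [Set.indicator_of_mem h]
  · rw [Set.indicator_of_notMem h, hsupp (s - a), zero_smul]
    intro hc
    obtain ⟨hc1, hc2⟩ := hc
    exact h ⟨by linarith, by linarith⟩

lemma ftc_decomp (f f' : ℝ → X) (hderiv : ∀ t, HasDerivAt f (f' t) t) (hcont : Continuous f')
    (a : ℝ) :
    f a = (∫ x in a..(a+1), f x) - ∫ x in a..(a+1), (a + 1 - x) • f' x := by
  have hfc : Continuous f := by
    rw [continuous_iff_continuousAt]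
    exact fun x => (hderiv x).continuousAt
  have hH : ∀ x ∈ Set.uIcc a (a+1), HasDerivAt (fun y => (a + 1 - y) • f y)
      ((a + 1 - x) • f' x + (-1 : ℝ) • f x) x := by
    intro x _
    exact HasDerivAt.smul ((hasDerivAt_id x).const_sub (a+1)) (hderiv x)
  have hint1 : IntervalIntegrable (fun x => (-1 : ℝ) • f x) volume a (a+1) :=
    (hfc.const_smul _).intervalIntegrable _ _
  have hint2 : IntervalIntegrable (fun x => (a + 1 - x) • f' x) volume a (a+1) :=
    (((continuous_const.sub continuous_id).smul hcont)).intervalIntegrable _ _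
  have heq := intervalIntegral.integral_eq_sub_of_hasDerivAt hH (hint2.add hint1)
  rw [intervalIntegral.integral_add hint2 hint1, intervalIntegral.integral_smul] at heq
  have h0 : (a + 1 - (a + 1)) = (0 : ℝ) := by ring
  have h1 : (a + 1 - a) = (1 : ℝ) := by ring
  rw [h0, h1, zero_smul, one_smul, neg_one_smul] at heq
  -- heq : ∫ (a+1-x)•f' + -(∫ f) = 0 - f a
  have : f a = -((∫ x in a..(a+1), (a + 1 - x) • f' x) + -(∫ x in a..(a+1), f x)) := by
    rw [heq]; abel
  rw [this]; abel

end Calc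

lemma le_gammaNorm {S X : Type*} [MeasurableSpace S] [NormedAddCommGroup X] [NormedSpace ℝ X]
    (μ : Measure S) (f : S → X) {N : ℕ} (g : Fin N → S → ℝ)
    (hg : ∀ n m : Fin N, (∫ s, g n s * g m s ∂μ) = if n = m then 1 else 0) :
    ENNReal.ofReal
        (Real.sqrt (∫ ω, ‖∑ n, ω n • (∫ s, g n s • f s ∂μ)‖ ^ 2 ∂(gaussPi N)))
      ≤ gammaNorm μ f := by
  rw [gammaNorm]
  exact le_iSup_of_le N (le_iSup_of_le g (le_iSup_of_le hg le_rfl))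
/-! ### The two profile functions -/

def rho1 : ℝ → ℝ := fun x => if x ∈ Ico (0:ℝ) 1 then 1 else 0

def rho2 : ℝ → ℝ := fun x => if x ∈ Ico (0:ℝ) 1 then Real.sqrt 3 * (1 - x) else 0

lemma rho1_supp : ∀ x, x ∉ Ico (0:ℝ) 1 → rho1 x = 0 := fun _ h => if_neg h

lemma rho2_supp : ∀ x, x ∉ Ico (0:ℝ) 1 → rho2 x = 0 := fun _ h => if_neg h

lemma rho1_norm : (∫ x, rho1 x * rho1 x) = 1 := by
  have h : (fun x => rho1 x * rho1 x) = Set.indicator (Ico (0:ℝ) 1) (fun _ => (1:ℝ)) := by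
    funext x
    by_cases h : x ∈ Ico (0:ℝ) 1 <;> simp [rho1, h]
  rw [h, integral_indicator_const _ measurableSet_Ico]
  simp [Real.volume_Ico]

lemma rho2_norm : (∫ x, rho2 x * rho2 x) = 1 := by
  have h3 : Real.sqrt 3 * Real.sqrt 3 = 3 := Real.mul_self_sqrt (by norm_num)
  have h : (fun x => rho2 x * rho2 x)
      = Set.indicator (Ico (0:ℝ) 1) (fun x => 3 * (1-x)^2) := by
    funext x
    by_cases h : x ∈ Ico (0:ℝ) 1
    · rw [Set.indicator_of_mem h]
      simp only [rho2, if_pos h]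
      linear_combination (1-x)^2 * h3
    · rw [Set.indicator_of_notMem h]
      simp [rho2, h]
  rw [h, integral_indicator measurableSet_Ico, setIntegral_congr_set Ico_ae_eq_Ioc,
    ← intervalIntegral.integral_of_le (by norm_num : (0:ℝ) ≤ 1)]
  have hd : ∀ x ∈ Set.uIcc (0:ℝ) 1, HasDerivAt (fun y : ℝ => -(1-y)^3) (3*(1-x)^2) x := by
    intro x _
    have hx := (((hasDerivAt_id x).const_sub 1).pow 3).neg
    refine hx.congr_deriv ?_
    simp only [id]
    norm_num
  rw [intervalIntegral.integral_eq_sub_of_hasDerivAt hd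
    (Continuous.intervalIntegrable (by continuity) _ _)]
  norm_num

/-- For a K-convex space `X` and `f ∈ C¹(ℝ;X)` with `f, f' ∈ γ(ℝ;X)`,
for every `t ∈ ℝ`: `‖(f(n+t))_{n∈ℤ}‖_{ε(ℤ;X)} ≲ ‖f‖_{γ(ℝ;X)} + ‖f'‖_{γ(ℝ;X)}`. -/
theorem statement7 {X : Type*} [NormedAddCommGroup X] [NormedSpace ℝ X] [CompleteSpace X]
    (hK : KConvex X) :
    ∃ c : ℝ≥0∞, c ≠ ⊤ ∧
      ∀ (f f' : ℝ → X),
        (∀ t : ℝ, HasDerivAt f (f' t) t) → Continuous f' →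
        MemGamma volume f → MemGamma volume f' →
        ∀ t : ℝ,
          radNorm (fun n : ℤ => f ((n : ℝ) + t)) ≤
            c * (gammaNorm volume f + gammaNorm volume f') := by
  classical
  refine ⟨ENNReal.ofReal mAbs⁻¹, ENNReal.ofReal_ne_top, ?_⟩
  intro f f' hderiv hcont hf hf' t
  rw [radNorm]
  refine iSup_le fun s => ?_
  set N := s.card with hN
  set e : {a // a ∈ s} ≃ Fin N := s.equivFin with he
  set a : Fin N → ℝ := fun i => (((e.symm i : ℤ) : ℝ) + t) with ha
  have hsep : ∀ i j : Fin N, i ≠ j → 1 ≤ |a i - a j| := by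
    intro i j hij
    have hne : ((e.symm i : ℤ)) ≠ ((e.symm j : ℤ)) := by
      intro hc
      exact (e.symm.injective.ne hij) (Subtype.ext hc)
    have h1 : a i - a j = (((e.symm i : ℤ) - (e.symm j : ℤ) : ℤ) : ℝ) := by
      rw [ha]; push_cast; ring
    rw [h1, ← Int.cast_abs]
    exact_mod_cast Int.one_le_abs (sub_ne_zero.mpr hne)
  -- the two orthonormal systems
  have ho1 := ortho_system rho1 rho1_supp rho1_norm a hsep
  have ho2 := ortho_system rho2 rho2_supp rho2_norm a hsep
  set v : Fin N → X := fun n => ∫ x, rho1 (x - a n) • f x with hv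
  set u : Fin N → X := fun n => ∫ x, rho2 (x - a n) • f' x with hu
  set w : Fin N → X := fun n => ∫ x in (a n)..(a n + 1), (a n + 1 - x) • f' x with hw
  -- identification of the Pettis integrals
  have hv' : ∀ n, v n = ∫ x in (a n)..(a n + 1), f x := by
    intro n
    simp only [hv]
    rw [integral_shift_to_Ico rho1 rho1_supp (a n) f,
      setIntegral_congr_fun measurableSet_Ico (g := f) (fun x hx => by
        rw [mem_Ico] at hx
        rw [show rho1 (x - a n) = 1 from if_pos (by rw [Set.mem_Ico]; constructor <;> linarith [hx.1, hx.2]),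
          one_smul]),
      setIntegral_congr_set Ico_ae_eq_Ioc,
      ← intervalIntegral.integral_of_le (by linarith : a n ≤ a n + 1)]
  have hu' : ∀ n, u n = Real.sqrt 3 • w n := by
    intro n
    simp only [hu]
    rw [integral_shift_to_Ico rho2 rho2_supp (a n) f',
      setIntegral_congr_fun measurableSet_Ico
        (g := fun x => Real.sqrt 3 • ((a n + 1 - x) • f' x)) (fun x hx => by
        rw [mem_Ico] at hx
        rw [show rho2 (x - a n) = Real.sqrt 3 * (1 - (x - a n)) from
            if_pos (by rw [Set.mem_Ico]; constructor <;> linarith [hx.1, hx.2]),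
          show (1 : ℝ) - (x - a n) = a n + 1 - x by ring, mul_smul]),
      integral_smul, hw, setIntegral_congr_set Ico_ae_eq_Ioc,
      ← intervalIntegral.integral_of_le (by linarith : a n ≤ a n + 1)]
  -- FTC decomposition
  have hsqrt3 : (1:ℝ) ≤ Real.sqrt 3 := by
    rw [show (1:ℝ) = Real.sqrt 1 by simp]
    exact Real.sqrt_le_sqrt (by norm_num)
  have hdecomp : ∀ n, f (a n) = v n - (Real.sqrt 3)⁻¹ • u n := by
    intro n
    rw [hu', hv', smul_smul, inv_mul_cancel₀ (by positivity), one_smul]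
    exact ftc_decomp f f' hderiv hcont (a n)
  -- Rademacher average bound
  set S1 : ℝ := Real.sqrt (∫ ω, ‖∑ n, ω n • v n‖ ^ 2 ∂(gaussPi N)) with hS1
  set S2 : ℝ := Real.sqrt (∫ ω, ‖∑ n, ω n • u n‖ ^ 2 ∂(gaussPi N)) with hS2
  have hreal : radAvgF (fun n : Fin N => f (a n)) ≤ mAbs⁻¹ * (S1 + S2) := by
    have h1 := radAvgF_le_sqrt_gauss N v
    have h2 := radAvgF_le_sqrt_gauss N u
    have h3 : radAvgF (fun n : Fin N => f (a n))
        ≤ radAvgF v + (Real.sqrt 3)⁻¹ * radAvgF u := by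
      have := radAvgF_sub_le v (fun n => (Real.sqrt 3)⁻¹ • u n)
      rw [radAvgF_smul, Real.norm_eq_abs, abs_of_nonneg (by positivity)] at this
      calc radAvgF (fun n : Fin N => f (a n))
          = radAvgF (fun n : Fin N => v n - (Real.sqrt 3)⁻¹ • u n) := by
            congr 1; funext n; exact hdecomp n
        _ ≤ _ := this
    have h4 : (Real.sqrt 3)⁻¹ * radAvgF u ≤ radAvgF u :=
      mul_le_of_le_one_left (radAvgF_nonneg u) (inv_le_one_of_one_le₀ hsqrt3)
    rw [mul_add]
    have h5 : mAbs⁻¹ * Real.sqrt (∫ ω, ‖∑ n, ω n • v n‖ ^ 2 ∂(gaussPi N)) = mAbs⁻¹ * S1 := rfl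
    linarith
  -- gammaNorm bounds
  have hg1 : ENNReal.ofReal S1 ≤ gammaNorm volume f := by
    have := le_gammaNorm volume f (fun n x => rho1 (x - a n)) ho1
    exact this
  have hg2 : ENNReal.ofReal S2 ≤ gammaNorm volume f' := by
    have := le_gammaNorm volume f' (fun n x => rho2 (x - a n)) ho2
    exact this
  -- reindex the subtype family
  have hreindex : radAvgF (fun n : {a // a ∈ s} => f (((n : ℤ) : ℝ) + t))
      = radAvgF (fun n : Fin N => f (a n)) := by
    rw [← radAvgF_comp_equiv e (fun n : Fin N => f (a n))]
    congr 1
    funext n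
    rw [ha]
    simp
  rw [hreindex]
  calc ENNReal.ofReal (radAvgF (fun n : Fin N => f (a n)))
      ≤ ENNReal.ofReal (mAbs⁻¹ * (S1 + S2)) := ENNReal.ofReal_le_ofReal hreal
    _ = ENNReal.ofReal mAbs⁻¹ * ENNReal.ofReal (S1 + S2) := by
        rw [ENNReal.ofReal_mul (inv_nonneg.mpr mAbs_pos.le)]
    _ ≤ ENNReal.ofReal mAbs⁻¹ * (ENNReal.ofReal S1 + ENNReal.ofReal S2) :=
        mul_le_mul' le_rfl ENNReal.ofReal_add_le
    _ ≤ ENNReal.ofReal mAbs⁻¹ * (gammaNorm volume f + gammaNorm volume f') :=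
        mul_le_mul' le_rfl (add_le_add hg1 hg2)
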